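/- arXiv:1602.04472 — 2 statements merged into one kernel-verified Lean document; each statement's English description precedes it below -/
import Mathlib

section
/- Let n ≥ 1 and let p₁,…,p_n ∈ ℂ[[t]]; set p₀ := 1. Define Lu := u^{(n)} + p₁·u^{(n−1)} + … + p_n·u and its adjoint L*v := Σ_{m=0}^{n} (−1)^m·(p_{n−m}·v)^{(m)}. Let S := ker L ⊂ ℂ[[t]] and S* := ker L* ⊂ ℂ[[t]] be the solution spaces, and define the bilinear form β : S × S* → ℂ by β(u,v) := Σ_{m=1}^{n} Σ_{k=0}^{m−1} (−1)^k · u^{(m−1−k)}(0) · (p_{n−m}·v)^{(k)}(0) (the value at 0 of the bilinear concomitant B(u,v) satisfying (Lu)v − u(L*v) = B(u,v)′). Then β is non-degenerate: if u ∈ S satisfies β(u,v) = 0 for all v ∈ S*, then u = 0, and if v ∈ S* satisfies β(u,v) = 0 for all u ∈ S, then v = 0. -/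
open PowerSeries

noncomputable section

/-- The `i`-th divided derivative `(1/i!)·f⁽ⁱ⁾` of a formal power series. -/
def dDeriv (i : ℕ) (f : ℂ⟦X⟧) : ℂ⟦X⟧ :=
  (Nat.factorial i : ℂ)⁻¹ • (⇑(PowerSeries.derivative ℂ))^[i] f

/-- The wronskian of a parametrised arc in `ℂ^N`. -/
def wrons {N : ℕ} (a : Fin N → ℂ⟦X⟧) : ℂ⟦X⟧ :=
  Matrix.det (Matrix.of fun i j : Fin N => dDeriv (j : ℕ) (a i))

/-- A parametrised arc is non-inflexional if its wronskian is a unit of `ℂ⟦t⟧`. -/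
def NonInflexional {N : ℕ} (a : Fin N → ℂ⟦X⟧) : Prop :=
  PowerSeries.constantCoeff (R := ℂ) (wrons a) ≠ 0

/-- Composition `g ∘ φ` of formal power series (meaningful when `φ(0) = 0`). -/
def pscomp (φ g : ℂ⟦X⟧) : ℂ⟦X⟧ :=
  PowerSeries.mk fun m =>
    PowerSeries.coeff (R := ℂ) m
      (∑ k ∈ Finset.range (m + 1), PowerSeries.C (R := ℂ) (PowerSeries.coeff (R := ℂ) k g) * φ ^ k)

/-- `c` is a normalization of the arc `a`: `c(t) = u(t)·(g·a)(φ(t))` with `g ∈ GL_N(ℂ)`,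
`u` a unit of `ℂ⟦t⟧`, `φ(0) = 0`, `φ′(0) ≠ 0`. -/
def IsNormalization {N : ℕ} (a c : Fin N → ℂ⟦X⟧) : Prop :=
  ∃ (g : Matrix (Fin N) (Fin N) ℂ) (u φ : ℂ⟦X⟧),
    IsUnit g.det ∧ IsUnit u ∧ PowerSeries.constantCoeff (R := ℂ) φ = 0 ∧
    PowerSeries.coeff (R := ℂ) 1 φ ≠ 0 ∧
    ∀ i, c i = u * pscomp φ (∑ j, g i j • a j)

/-- `f ≡ g (mod t^m)`. -/
def ModEq (f g : ℂ⟦X⟧) (m : ℕ) : Prop := ∀ j < m, PowerSeries.coeff (R := ℂ) j (f - g) = 0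

/-- The determinant `det(a_{e 0}, a_{e 1}, …, a_{e n})` of coefficient vectors of the arc `a`. -/
def Umin {n : ℕ} (e : Fin (n + 1) → ℕ) (a : Fin (n + 1) → ℂ⟦X⟧) : ℂ :=
  Matrix.det (Matrix.of fun i j => PowerSeries.coeff (R := ℂ) (e j) (a i))

/-- `U = U_{(0)}`. -/
def U0 {n : ℕ} (a : Fin (n + 1) → ℂ⟦X⟧) : ℂ := Umin (fun j => (j : ℕ)) a
/-- `U₁ = U_{(1)}`. -/
def U1 {n : ℕ} (a : Fin (n + 1) → ℂ⟦X⟧) : ℂ :=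
  Umin (fun j => if (j : ℕ) = n then n + 1 else (j : ℕ)) a
/-- `U₂ = U_{(2)}`. -/
def U2 {n : ℕ} (a : Fin (n + 1) → ℂ⟦X⟧) : ℂ :=
  Umin (fun j => if (j : ℕ) = n then n + 2 else (j : ℕ)) a
/-- `U₃ = U_{(3)}`. -/
def U3 {n : ℕ} (a : Fin (n + 1) → ℂ⟦X⟧) : ℂ :=
  Umin (fun j => if (j : ℕ) = n then n + 3 else (j : ℕ)) a
/-- `U₁₁ = U_{(1,1)}`. -/
def U11 {n : ℕ} (a : Fin (n + 1) → ℂ⟦X⟧) : ℂ :=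
  Umin (fun j => if n - 1 ≤ (j : ℕ) then (j : ℕ) + 1 else (j : ℕ)) a
/-- `U₂₁ = U_{(2,1)}`. -/
def U21 {n : ℕ} (a : Fin (n + 1) → ℂ⟦X⟧) : ℂ :=
  Umin (fun j => if (j : ℕ) = n then n + 2 else if (j : ℕ) = n - 1 then n else (j : ℕ)) a
/-- `U₁₁₁ = U_{(1,1,1)}`. -/
def U111 {n : ℕ} (a : Fin (n + 1) → ℂ⟦X⟧) : ℂ :=
  Umin (fun j => if n - 2 ≤ (j : ℕ) then (j : ℕ) + 1 else (j : ℕ)) a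

/-- The Monge expression `U²(U₃+2U₂₁−2U₁₁₁) − 3UU₁(U₁₁+U₂) + 2U₁³` of an arc. -/
def MongeExpr {n : ℕ} (a : Fin (n + 1) → ℂ⟦X⟧) : ℂ :=
  U0 a ^ 2 * (U3 a + 2 * U21 a - 2 * U111 a) - 3 * U0 a * U1 a * (U11 a + U2 a) + 2 * U1 a ^ 3

end


section BilinearConcomitantAux
open PowerSeries

lemma coeff_neg_one_pow_mul (m N : ℕ) (g : ℂ⟦X⟧) :
    PowerSeries.coeff (R := ℂ) N ((-1 : ℂ⟦X⟧)^m * g) = (-1:ℂ)^m * PowerSeries.coeff (R := ℂ) N g := by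
  rw [show ((-1:ℂ⟦X⟧))^m = PowerSeries.C (R := ℂ) ((-1:ℂ)^m) by rw [map_pow, map_neg, map_one],
    PowerSeries.coeff_C_mul]

lemma coeff_iter_deriv (f : ℂ⟦X⟧) (j k : ℕ) :
    PowerSeries.coeff (R := ℂ) k ((⇑(PowerSeries.derivative ℂ))^[j] f)
      = ((k+1).ascFactorial j : ℂ) * PowerSeries.coeff (R := ℂ) (k + j) f := by
  induction j generalizing f with
  | zero => simp
  | succ j ih =>
    rw [Function.iterate_succ_apply, ih, PowerSeries.coeff_derivative, Nat.ascFactorial_succ]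
    rw [show k + (j+1) = k + j + 1 by omega]
    push_cast
    ring

lemma coeffL (n : ℕ) (p : ℕ → ℂ⟦X⟧) (hp0 : p 0 = 1) (u : ℂ⟦X⟧) (N : ℕ) :
    PowerSeries.coeff (R := ℂ) N (∑ i ∈ Finset.range (n+1), p i * (⇑(PowerSeries.derivative ℂ))^[n-i] u)
      = ((N+1).ascFactorial n : ℂ) * PowerSeries.coeff (R := ℂ) (N+n) u +
        ∑ i ∈ Finset.Icc 1 n, ∑ ab ∈ Finset.HasAntidiagonal.antidiagonal N,
          PowerSeries.coeff (R := ℂ) ab.1 (p i) * (((ab.2+1).ascFactorial (n-i) : ℕ) : ℂ) *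
            PowerSeries.coeff (R := ℂ) (ab.2 + n - i) u := by
  rw [show Finset.range (n+1) = insert 0 (Finset.Icc 1 n) from by
      ext x; simp [Finset.mem_Icc]; omega,
    Finset.sum_insert (by simp), map_add, map_sum]
  congr 1
  · rw [hp0, one_mul, Nat.sub_zero, coeff_iter_deriv]
  · refine Finset.sum_congr rfl fun i hi => ?_
    rw [PowerSeries.coeff_mul]
    refine Finset.sum_congr rfl fun ab hab => ?_
    have hi' := Finset.mem_Icc.mp hi
    rw [coeff_iter_deriv, show ab.2 + (n - i) = ab.2 + n - i from by omega]
    ring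

lemma coeffLstar (n : ℕ) (p : ℕ → ℂ⟦X⟧) (hp0 : p 0 = 1) (v : ℂ⟦X⟧) (N : ℕ) :
    PowerSeries.coeff (R := ℂ) N (∑ m ∈ Finset.range (n+1),
        (-1 : ℂ⟦X⟧) ^ m * (⇑(PowerSeries.derivative ℂ))^[m] (p (n - m) * v))
      = (-1:ℂ)^n * ((N+1).ascFactorial n : ℂ) * PowerSeries.coeff (R := ℂ) (N+n) v +
        ∑ m ∈ Finset.range n, (-1:ℂ)^m * (((N+1).ascFactorial m : ℕ) : ℂ) *
          ∑ ab ∈ Finset.HasAntidiagonal.antidiagonal (N+m),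
            PowerSeries.coeff (R := ℂ) ab.1 (p (n-m)) * PowerSeries.coeff (R := ℂ) ab.2 v := by
  rw [Finset.sum_range_succ, map_add, map_sum, add_comm]
  congr 1
  · rw [coeff_neg_one_pow_mul, coeff_iter_deriv, Nat.sub_self, hp0, one_mul, mul_assoc]
  · refine Finset.sum_congr rfl fun m hm => ?_
    rw [coeff_neg_one_pow_mul, coeff_iter_deriv, PowerSeries.coeff_mul, mul_assoc,
      Finset.mul_sum]

noncomputable def solL (n : ℕ) (p : ℕ → ℂ⟦X⟧) (init : ℕ → ℂ) (M : ℕ) : ℂ :=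
  if M < n then init M
  else -(((M - n + 1).ascFactorial n : ℂ))⁻¹ *
    ∑ i ∈ (Finset.Icc 1 n).attach,
      ∑ ab ∈ (Finset.HasAntidiagonal.antidiagonal (M - n)).attach,
        PowerSeries.coeff (R := ℂ) ab.1.1 (p i.1) * (((ab.1.2 + 1).ascFactorial (n - i.1) : ℕ) : ℂ) *
          solL n p init (ab.1.2 + n - i.1)
  termination_by M
  decreasing_by
    have hi := Finset.mem_Icc.mp i.2
    have hab := Finset.HasAntidiagonal.mem_antidiagonal.mp ab.2
    omega

noncomputable def solLs (n : ℕ) (p : ℕ → ℂ⟦X⟧) (init : ℕ → ℂ) (M : ℕ) : ℂ :=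
  if M < n then init M
  else -((-1:ℂ)^n) * (((M - n + 1).ascFactorial n : ℂ))⁻¹ *
    ∑ m ∈ (Finset.range n).attach,
      (-1:ℂ)^m.1 * (((M - n + 1).ascFactorial m.1 : ℕ) : ℂ) *
        ∑ ab ∈ (Finset.HasAntidiagonal.antidiagonal (M - n + m.1)).attach,
          PowerSeries.coeff (R := ℂ) ab.1.1 (p (n - m.1)) * solLs n p init ab.1.2
  termination_by M
  decreasing_by
    have hm := Finset.mem_range.mp m.2
    have hab := Finset.HasAntidiagonal.mem_antidiagonal.mp ab.2
    omega

lemma solL_lt {n p init M} (h : M < n) : solL n p init M = init M := by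
  rw [solL, if_pos h]

lemma solLs_lt {n p init M} (h : M < n) : solLs n p init M = init M := by
  rw [solLs, if_pos h]

lemma solL_ge {n p init M} (h : ¬ M < n) : solL n p init M =
    -(((M - n + 1).ascFactorial n : ℂ))⁻¹ *
    ∑ i ∈ Finset.Icc 1 n,
      ∑ ab ∈ Finset.HasAntidiagonal.antidiagonal (M - n),
        PowerSeries.coeff (R := ℂ) ab.1 (p i) * (((ab.2 + 1).ascFactorial (n - i) : ℕ) : ℂ) *
          solL n p init (ab.2 + n - i) := by
  rw [solL, if_neg h]
  congr 1
  rw [Finset.sum_attach (Finset.Icc 1 n) fun i => ∑ ab ∈ (Finset.HasAntidiagonal.antidiagonal (M - n)).attach,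
    PowerSeries.coeff (R := ℂ) ab.1.1 (p i) * (((ab.1.2 + 1).ascFactorial (n - i) : ℕ) : ℂ) *
      solL n p init (ab.1.2 + n - i)]
  exact Finset.sum_congr rfl fun i _ => Finset.sum_attach (Finset.HasAntidiagonal.antidiagonal (M - n))
    (fun ab => PowerSeries.coeff (R := ℂ) ab.1 (p i) * (((ab.2 + 1).ascFactorial (n - i) : ℕ) : ℂ) *
      solL n p init (ab.2 + n - i))

lemma solLs_ge {n p init M} (h : ¬ M < n) : solLs n p init M =
    -((-1:ℂ)^n) * (((M - n + 1).ascFactorial n : ℂ))⁻¹ *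
    ∑ m ∈ Finset.range n,
      (-1:ℂ)^m * (((M - n + 1).ascFactorial m : ℕ) : ℂ) *
        ∑ ab ∈ Finset.HasAntidiagonal.antidiagonal (M - n + m),
          PowerSeries.coeff (R := ℂ) ab.1 (p (n - m)) * solLs n p init ab.2 := by
  rw [solLs, if_neg h]
  congr 1
  rw [Finset.sum_attach (Finset.range n) fun m => (-1:ℂ)^m * (((M - n + 1).ascFactorial m : ℕ) : ℂ) *
    ∑ ab ∈ (Finset.HasAntidiagonal.antidiagonal (M - n + m)).attach,
      PowerSeries.coeff (R := ℂ) ab.1.1 (p (n - m)) * solLs n p init ab.1.2]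
  exact Finset.sum_congr rfl fun m _ => congrArg _ (Finset.sum_attach (Finset.HasAntidiagonal.antidiagonal (M - n + m))
    (fun ab => PowerSeries.coeff (R := ℂ) ab.1 (p (n - m)) * solLs n p init ab.2))
lemma asc_ne (N n : ℕ) : ((N+1).ascFactorial n : ℂ) ≠ 0 := by
  exact_mod_cast (Nat.ascFactorial_pos N n).ne'

lemma const_iter_deriv (f : ℂ⟦X⟧) (j : ℕ) :
    PowerSeries.constantCoeff (R := ℂ) ((⇑(PowerSeries.derivative ℂ))^[j] f)
      = (j.factorial : ℂ) * PowerSeries.coeff (R := ℂ) j f := by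
  rw [← PowerSeries.coeff_zero_eq_constantCoeff, coeff_iter_deriv, Nat.one_ascFactorial,
    zero_add]

lemma uniqueL (n : ℕ) (p : ℕ → ℂ⟦X⟧) (hp0 : p 0 = 1) (u : ℂ⟦X⟧)
    (hLu : ∀ N, PowerSeries.coeff (R := ℂ) N
      (∑ i ∈ Finset.range (n+1), p i * (⇑(PowerSeries.derivative ℂ))^[n-i] u) = 0)
    (hjet : ∀ j < n, PowerSeries.coeff (R := ℂ) j u = 0) : u = 0 := by
  ext N
  rw [map_zero]
  induction N using Nat.strong_induction_on with
  | _ N ih =>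
    by_cases h : N < n
    · exact hjet N h
    · have hc := hLu (N - n)
      rw [coeffL n p hp0, show N - n + n = N by omega] at hc
      have hz : ∑ i ∈ Finset.Icc 1 n, ∑ ab ∈ Finset.HasAntidiagonal.antidiagonal (N-n),
          PowerSeries.coeff (R := ℂ) ab.1 (p i) * (((ab.2+1).ascFactorial (n-i) : ℕ) : ℂ) *
            PowerSeries.coeff (R := ℂ) (ab.2 + n - i) u = 0 := by
        refine Finset.sum_eq_zero fun i hi => Finset.sum_eq_zero fun ab hab => ?_
        have hi' := Finset.mem_Icc.mp hi
        have hab' := Finset.HasAntidiagonal.mem_antidiagonal.mp hab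
        rw [ih (ab.2 + n - i) (by omega), mul_zero]
      rw [hz, add_zero] at hc
      exact (mul_eq_zero.mp hc).resolve_left (asc_ne _ _)

lemma uniqueLs (n : ℕ) (p : ℕ → ℂ⟦X⟧) (hp0 : p 0 = 1) (v : ℂ⟦X⟧)
    (hLv : ∀ N, PowerSeries.coeff (R := ℂ) N (∑ m ∈ Finset.range (n+1),
      (-1 : ℂ⟦X⟧) ^ m * (⇑(PowerSeries.derivative ℂ))^[m] (p (n - m) * v)) = 0)
    (hjet : ∀ j < n, PowerSeries.coeff (R := ℂ) j v = 0) : v = 0 := by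
  ext N
  rw [map_zero]
  induction N using Nat.strong_induction_on with
  | _ N ih =>
    by_cases h : N < n
    · exact hjet N h
    · have hc := hLv (N - n)
      rw [coeffLstar n p hp0, show N - n + n = N by omega] at hc
      have hz : ∑ m ∈ Finset.range n, (-1:ℂ)^m * (((N-n+1).ascFactorial m : ℕ) : ℂ) *
          ∑ ab ∈ Finset.HasAntidiagonal.antidiagonal (N-n+m),
            PowerSeries.coeff (R := ℂ) ab.1 (p (n-m)) * PowerSeries.coeff (R := ℂ) ab.2 v = 0 := by
        refine Finset.sum_eq_zero fun m hm => ?_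
        have hm' := Finset.mem_range.mp hm
        have : ∑ ab ∈ Finset.HasAntidiagonal.antidiagonal (N-n+m),
            PowerSeries.coeff (R := ℂ) ab.1 (p (n-m)) * PowerSeries.coeff (R := ℂ) ab.2 v = 0 := by
          refine Finset.sum_eq_zero fun ab hab => ?_
          have hab' := Finset.HasAntidiagonal.mem_antidiagonal.mp hab
          rw [ih ab.2 (by omega), mul_zero]
        rw [this, mul_zero]
      rw [hz, add_zero] at hc
      have h2 : ((-1:ℂ)^n * ((N-n+1).ascFactorial n : ℂ)) ≠ 0 :=
        mul_ne_zero (pow_ne_zero _ (by norm_num)) (asc_ne _ _)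
      exact (mul_eq_zero.mp hc).resolve_left h2

lemma exL (n : ℕ) (p : ℕ → ℂ⟦X⟧) (hp0 : p 0 = 1) (init : ℕ → ℂ) (N : ℕ) :
    PowerSeries.coeff (R := ℂ) N (∑ i ∈ Finset.range (n+1),
      p i * (⇑(PowerSeries.derivative ℂ))^[n-i] (PowerSeries.mk (solL n p init))) = 0 := by
  rw [coeffL n p hp0]
  simp only [PowerSeries.coeff_mk]
  rw [solL_ge (show ¬ N + n < n by omega), show N + n - n = N by omega,
    neg_mul, mul_neg, ← mul_assoc, mul_inv_cancel₀ (asc_ne N n), one_mul, neg_add_cancel]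

lemma exLs (n : ℕ) (p : ℕ → ℂ⟦X⟧) (hp0 : p 0 = 1) (init : ℕ → ℂ) (N : ℕ) :
    PowerSeries.coeff (R := ℂ) N (∑ m ∈ Finset.range (n+1),
      (-1 : ℂ⟦X⟧) ^ m * (⇑(PowerSeries.derivative ℂ))^[m]
        (p (n - m) * PowerSeries.mk (solLs n p init))) = 0 := by
  rw [coeffLstar n p hp0]
  simp only [PowerSeries.coeff_mk]
  rw [solLs_ge (show ¬ N + n < n by omega), show N + n - n = N by omega]
  set S := ∑ m ∈ Finset.range n, (-1:ℂ)^m * (((N+1).ascFactorial m : ℕ) : ℂ) *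
    ∑ ab ∈ Finset.HasAntidiagonal.antidiagonal (N+m),
      PowerSeries.coeff (R := ℂ) ab.1 (p (n-m)) * solLs n p init ab.2 with hS
  set A := (((N+1).ascFactorial n : ℕ) : ℂ) with hA
  have h1 : ((-1:ℂ)^n) * ((-1:ℂ)^n) = 1 := by
    rw [← pow_add]; exact Even.neg_one_pow ⟨n, rfl⟩
  have h2 : A * A⁻¹ = 1 := mul_inv_cancel₀ (asc_ne N n)
  linear_combination (-(A * A⁻¹ * S)) * h1 + (-S) * h2

section
variable (n : ℕ) (p : ℕ → ℂ⟦X⟧)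
lemma factorial_ne (k : ℕ) : ((k.factorial : ℕ) : ℂ) ≠ 0 :=
  Nat.cast_ne_zero.mpr k.factorial_ne_zero

lemma betaA (hn : 1 ≤ n) (hp0 : p 0 = 1) (u v : ℂ⟦X⟧)
    (j : ℕ) (hj : j < n) (hu0 : ∀ i < j, PowerSeries.coeff (R := ℂ) i u = 0)
    (hune : PowerSeries.coeff (R := ℂ) j u ≠ 0)
    (hv : ∀ l < n, PowerSeries.coeff (R := ℂ) l v = if l = n-1-j then 1 else 0) :
    (∑ m ∈ Finset.Icc 1 n, ∑ k ∈ Finset.range m, (-1:ℂ)^k *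
      PowerSeries.constantCoeff (R := ℂ) ((⇑(PowerSeries.derivative ℂ))^[m-1-k] u) *
      PowerSeries.constantCoeff (R := ℂ) ((⇑(PowerSeries.derivative ℂ))^[k] (p (n-m) * v))) ≠ 0 := by
  simp only [const_iter_deriv, PowerSeries.coeff_mul]
  have key : (∑ m ∈ Finset.Icc 1 n, ∑ k ∈ Finset.range m, (-1:ℂ)^k *
      ((((m-1-k).factorial : ℕ) : ℂ) * PowerSeries.coeff (R := ℂ) (m-1-k) u) *
      ((((k).factorial : ℕ) : ℂ) * ∑ ab ∈ Finset.HasAntidiagonal.antidiagonal k,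
        PowerSeries.coeff (R := ℂ) ab.1 (p (n-m)) * PowerSeries.coeff (R := ℂ) ab.2 v))
      = (-1:ℂ)^(n-1-j) * ((((n-1-(n-1-j)).factorial : ℕ) : ℂ) *
          PowerSeries.coeff (R := ℂ) (n-1-(n-1-j)) u) *
        ((((n-1-j).factorial : ℕ) : ℂ) *
          (PowerSeries.coeff (R := ℂ) 0 (p (n-n)) * PowerSeries.coeff (R := ℂ) (n-1-j) v)) := by
    rw [Finset.sum_eq_single_of_mem n (Finset.mem_Icc.mpr ⟨hn, le_refl n⟩) ?_]
    · rw [Finset.sum_eq_single_of_mem (n-1-j) (Finset.mem_range.mpr (by omega)) ?_]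
      · rw [Finset.sum_eq_single_of_mem ((0:ℕ), n-1-j)
          (Finset.HasAntidiagonal.mem_antidiagonal.mpr (by omega)) ?_]
        intro ab hab habne
        have h1 := Finset.HasAntidiagonal.mem_antidiagonal.mp hab
        by_cases h2 : ab.2 = n-1-j
        · exact absurd (Prod.ext_iff.mpr ⟨by omega, by omega⟩) habne
        · rw [hv ab.2 (by omega), if_neg h2, mul_zero]
      · intro k hk hkne
        have hk' := Finset.mem_range.mp hk
        rcases le_or_gt j (n-1-k) with hle | hlt
        · have hz : ∑ ab ∈ Finset.HasAntidiagonal.antidiagonal k,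
              PowerSeries.coeff (R := ℂ) ab.1 (p (n-n)) * PowerSeries.coeff (R := ℂ) ab.2 v = 0 := by
            refine Finset.sum_eq_zero fun ab hab => ?_
            have h1 := Finset.HasAntidiagonal.mem_antidiagonal.mp hab
            rw [hv ab.2 (by omega), if_neg (by omega), mul_zero]
          rw [hz, mul_zero, mul_zero]
        · rw [hu0 (n-1-k) hlt]; ring
    · intro m hm hmn
      have hm' := Finset.mem_Icc.mp hm
      refine Finset.sum_eq_zero fun k hk => ?_
      have hk' := Finset.mem_range.mp hk
      rcases le_or_gt j (m-1-k) with hle | hlt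
      · have hz : ∑ ab ∈ Finset.HasAntidiagonal.antidiagonal k,
            PowerSeries.coeff (R := ℂ) ab.1 (p (n-m)) * PowerSeries.coeff (R := ℂ) ab.2 v = 0 := by
          refine Finset.sum_eq_zero fun ab hab => ?_
          have h1 := Finset.HasAntidiagonal.mem_antidiagonal.mp hab
          rw [hv ab.2 (by omega), if_neg (by omega), mul_zero]
        rw [hz, mul_zero, mul_zero]
      · rw [hu0 (m-1-k) hlt]; ring
  rw [key]
  rw [Nat.sub_self, hp0, show n-1-(n-1-j) = j by omega, hv (n-1-j) (by omega), if_pos rfl]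
  simp only [PowerSeries.coeff_zero_eq_constantCoeff, map_one, one_mul, mul_one]
  exact mul_ne_zero (mul_ne_zero (pow_ne_zero _ (by norm_num))
    (mul_ne_zero (factorial_ne _) hune)) (factorial_ne _)
lemma betaB (hn : 1 ≤ n) (hp0 : p 0 = 1) (u v : ℂ⟦X⟧)
    (l : ℕ) (hl : l < n) (hv0 : ∀ i < l, PowerSeries.coeff (R := ℂ) i v = 0)
    (hvne : PowerSeries.coeff (R := ℂ) l v ≠ 0)
    (hu : ∀ i < n, PowerSeries.coeff (R := ℂ) i u = if i = n-1-l then 1 else 0) :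
    (∑ m ∈ Finset.Icc 1 n, ∑ k ∈ Finset.range m, (-1:ℂ)^k *
      PowerSeries.constantCoeff (R := ℂ) ((⇑(PowerSeries.derivative ℂ))^[m-1-k] u) *
      PowerSeries.constantCoeff (R := ℂ) ((⇑(PowerSeries.derivative ℂ))^[k] (p (n-m) * v))) ≠ 0 := by
  simp only [const_iter_deriv, PowerSeries.coeff_mul]
  have key : (∑ m ∈ Finset.Icc 1 n, ∑ k ∈ Finset.range m, (-1:ℂ)^k *
      ((((m-1-k).factorial : ℕ) : ℂ) * PowerSeries.coeff (R := ℂ) (m-1-k) u) *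
      ((((k).factorial : ℕ) : ℂ) * ∑ ab ∈ Finset.HasAntidiagonal.antidiagonal k,
        PowerSeries.coeff (R := ℂ) ab.1 (p (n-m)) * PowerSeries.coeff (R := ℂ) ab.2 v))
      = (-1:ℂ)^l * ((((n-1-l).factorial : ℕ) : ℂ) *
          PowerSeries.coeff (R := ℂ) (n-1-l) u) *
        ((((l).factorial : ℕ) : ℂ) *
          (PowerSeries.coeff (R := ℂ) 0 (p (n-n)) * PowerSeries.coeff (R := ℂ) l v)) := by
    rw [Finset.sum_eq_single_of_mem n (Finset.mem_Icc.mpr ⟨hn, le_refl n⟩) ?_]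
    · rw [Finset.sum_eq_single_of_mem l (Finset.mem_range.mpr (by omega)) ?_]
      · rw [Finset.sum_eq_single_of_mem ((0:ℕ), l)
          (Finset.HasAntidiagonal.mem_antidiagonal.mpr (by omega)) ?_]
        intro ab hab habne
        have h1 := Finset.HasAntidiagonal.mem_antidiagonal.mp hab
        by_cases h2 : ab.2 = l
        · exact absurd (Prod.ext_iff.mpr ⟨by omega, by omega⟩) habne
        · rw [hv0 ab.2 (by omega), mul_zero]
      · intro k hk hkne
        have hk' := Finset.mem_range.mp hk
        rw [hu (n-1-k) (by omega), if_neg (by omega)]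
        ring
    · intro m hm hmn
      have hm' := Finset.mem_Icc.mp hm
      refine Finset.sum_eq_zero fun k hk => ?_
      have hk' := Finset.mem_range.mp hk
      by_cases hcase : m-1-k = n-1-l
      · have hz : ∑ ab ∈ Finset.HasAntidiagonal.antidiagonal k,
            PowerSeries.coeff (R := ℂ) ab.1 (p (n-m)) * PowerSeries.coeff (R := ℂ) ab.2 v = 0 := by
          refine Finset.sum_eq_zero fun ab hab => ?_
          have h1 := Finset.HasAntidiagonal.mem_antidiagonal.mp hab
          rw [hv0 ab.2 (by omega), mul_zero]
        rw [hz]; ring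
      · rw [hu (m-1-k) (by omega), if_neg hcase]
        ring
  rw [key]
  rw [Nat.sub_self, hp0, hu (n-1-l) (by omega), if_pos rfl]
  simp only [PowerSeries.coeff_zero_eq_constantCoeff, map_one, one_mul, mul_one]
  exact mul_ne_zero (mul_ne_zero (pow_ne_zero _ (by norm_num))
    (factorial_ne _)) (mul_ne_zero (factorial_ne _) hvne)
end

end BilinearConcomitantAux

open PowerSeries in
/-- the bilinear concomitant evaluated at `0` gives a non-degenerate
pairing between the solution space of `L` and that of its adjoint `L*`. -/
theorem bilinear_concomitant_nondegenerate
    (n : ℕ) (hn : 1 ≤ n) (p : ℕ → ℂ⟦X⟧) (hp0 : p 0 = 1)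
    (L Lstar : ℂ⟦X⟧ → ℂ⟦X⟧) (β : ℂ⟦X⟧ → ℂ⟦X⟧ → ℂ)
    (hL : ∀ u, L u = ∑ i ∈ Finset.range (n + 1),
      p i * (⇑(PowerSeries.derivative ℂ))^[n - i] u)
    (hLstar : ∀ v, Lstar v = ∑ m ∈ Finset.range (n + 1),
      (-1 : ℂ⟦X⟧) ^ m * (⇑(PowerSeries.derivative ℂ))^[m] (p (n - m) * v))
    (hβ : ∀ u v, β u v = ∑ m ∈ Finset.Icc 1 n, ∑ k ∈ Finset.range m,
      (-1 : ℂ) ^ k *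
        PowerSeries.constantCoeff (R := ℂ) ((⇑(PowerSeries.derivative ℂ))^[m - 1 - k] u) *
        PowerSeries.constantCoeff (R := ℂ) ((⇑(PowerSeries.derivative ℂ))^[k] (p (n - m) * v))) :
    (∀ u, L u = 0 → (∀ v, Lstar v = 0 → β u v = 0) → u = 0) ∧
    (∀ v, Lstar v = 0 → (∀ u, L u = 0 → β u v = 0) → v = 0) := by
  classical
  constructor
  · intro u hLu hall
    by_contra hu
    have hex : ∃ j, j < n ∧ PowerSeries.coeff (R := ℂ) j u ≠ 0 := by
      by_contra hno
      push_neg at hno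
      exact hu (uniqueL n p hp0 u
        (fun N => by rw [← hL u, hLu, map_zero]) hno)
    set j₀ := Nat.find hex with hj₀def
    obtain ⟨hj₀n, hj₀ne⟩ := Nat.find_spec hex
    have hmin : ∀ i < j₀, PowerSeries.coeff (R := ℂ) i u = 0 := fun i hi => by
      by_contra hne
      exact Nat.find_min hex hi ⟨lt_trans hi hj₀n, hne⟩
    set v := PowerSeries.mk (solLs n p (fun l => if l = n-1-j₀ then 1 else 0)) with hvdef
    have hvsol : Lstar v = 0 := by
      rw [hLstar]
      exact PowerSeries.ext fun N => by rw [map_zero]; exact exLs n p hp0 _ N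
    have hvjet : ∀ l < n, PowerSeries.coeff (R := ℂ) l v = if l = n-1-j₀ then 1 else 0 :=
      fun l hl => by rw [hvdef, PowerSeries.coeff_mk, solLs_lt hl]
    have hβ0 := hall v hvsol
    rw [hβ u v] at hβ0
    exact betaA n p hn hp0 u v j₀ hj₀n hmin hj₀ne hvjet hβ0
  · intro v hLv hall
    by_contra hv
    have hex : ∃ l, l < n ∧ PowerSeries.coeff (R := ℂ) l v ≠ 0 := by
      by_contra hno
      push_neg at hno
      exact hv (uniqueLs n p hp0 v
        (fun N => by rw [← hLstar v, hLv, map_zero]) hno)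
    set l₀ := Nat.find hex with hl₀def
    obtain ⟨hl₀n, hl₀ne⟩ := Nat.find_spec hex
    have hmin : ∀ i < l₀, PowerSeries.coeff (R := ℂ) i v = 0 := fun i hi => by
      by_contra hne
      exact Nat.find_min hex hi ⟨lt_trans hi hl₀n, hne⟩
    set u := PowerSeries.mk (solL n p (fun i => if i = n-1-l₀ then 1 else 0)) with hudef
    have husol : L u = 0 := by
      rw [hL]
      exact PowerSeries.ext fun N => by rw [map_zero]; exact exL n p hp0 _ N
    have hujet : ∀ i < n, PowerSeries.coeff (R := ℂ) i u = if i = n-1-l₀ then 1 else 0 :=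
      fun i hi => by rw [hudef, PowerSeries.coeff_mk, solL_lt hi]
    have hβ0 := hall u husol
    rw [hβ u v] at hβ0
    exact betaB n p hn hp0 u v l₀ hl₀n hmin hl₀ne hujet hβ0
end

section
/- Let n ≥ 2 and let c = (c₀,…,c_{n+1}) be a parametrised arc in ℂ^{n+2} in Monge normal form for dimension n+1: c₀ = 1, c₁ = t, c_k ≡ t^k (mod t^{n+4}) for 2 ≤ k ≤ n, and c_{n+1} ≡ t^{n+1} (mod t^{n+5}). Let d := (c₁/t, c₂/t, …, c_{n+1}/t) be the projected arc in ℂ^{n+1} (each c_k for k ≥ 1 has zero constant term, so c_k/t ∈ ℂ[[t]]). Then d admits a normalization c′ = (c′₀,…,c′_n) in Monge normal form for dimension n: c′₀ = 1, c′₁ = t, c′_k ≡ t^k (mod t^{n+3}) for 2 ≤ k ≤ n−1, and c′_n ≡ t^n (mod t^{n+4}). (Projection from the center of an arc of the Monge hypersurface lands in the Monge hypersurface of the lower-dimensional projective space.) -/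
open PowerSeries

open PowerSeries in
private lemma coeff_pscomp' (φ g : ℂ⟦X⟧) (m : ℕ) :
    PowerSeries.coeff (R := ℂ) m (pscomp φ g) =
      ∑ k ∈ Finset.range (m + 1), PowerSeries.coeff (R := ℂ) k g * PowerSeries.coeff (R := ℂ) m (φ ^ k) := by
  simp [pscomp, map_sum]

open PowerSeries in
private lemma coeff_pow_zero_of_lt' {f : ℂ⟦X⟧} (hf : constantCoeff (R := ℂ) f = 0) {k l : ℕ}
    (h : l < k) : coeff (R := ℂ) l (f ^ k) = 0 :=
  (X_pow_dvd_iff.mp (pow_dvd_pow_of_dvd (X_dvd_iff.mpr hf) k)) l h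

open PowerSeries in
private lemma coeff_pow_congr' {f g : ℂ⟦X⟧} (hf : constantCoeff (R := ℂ) f = 0)
    (hg : constantCoeff (R := ℂ) g = 0) {m : ℕ}
    (h : ∀ i < m, coeff (R := ℂ) i f = coeff (R := ℂ) i g) :
    ∀ k j, j + 1 < m + k → coeff (R := ℂ) j (f ^ k) = coeff (R := ℂ) j (g ^ k) := by
  intro k
  induction k with
  | zero => intro j _; rfl
  | succ k ih =>
    intro j hj
    rw [pow_succ, pow_succ, coeff_mul, coeff_mul]
    refine Finset.sum_congr rfl fun p hp => ?_
    rw [Finset.HasAntidiagonal.mem_antidiagonal] at hp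
    rcases Nat.eq_zero_or_pos p.2 with h2 | h2
    · have e1 : coeff (R := ℂ) p.2 f = 0 := by rw [h2, coeff_zero_eq_constantCoeff, hf]
      have e2 : coeff (R := ℂ) p.2 g = 0 := by rw [h2, coeff_zero_eq_constantCoeff, hg]
      rw [e1, e2, mul_zero, mul_zero]
    · rcases lt_or_ge p.2 m with hm | hm
      · rw [h p.2 hm, ih p.1 (by omega)]
      · have hk : p.1 < k := by omega
        rw [coeff_pow_zero_of_lt' hf hk, coeff_pow_zero_of_lt' hg hk, zero_mul, zero_mul]

open PowerSeries in
noncomputable def invCoeff (f : ℂ⟦X⟧) : ℕ → ℂ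
  | 0 => 0
  | 1 => 1
  | (m+2) => -∑ l ∈ Finset.Icc 2 (m+2),
      PowerSeries.coeff (R := ℂ) l f *
      PowerSeries.coeff (R := ℂ) (m+2)
        ((PowerSeries.mk fun i => if h : i < m+2 then invCoeff f i else 0) ^ l)
  termination_by m => m
  decreasing_by exact h

open PowerSeries in
private lemma constantCoeff_invCoeff (f : ℂ⟦X⟧) :
    constantCoeff (R := ℂ) (mk (invCoeff f)) = 0 := by
  rw [← coeff_zero_eq_constantCoeff, coeff_mk, invCoeff]

open PowerSeries in
private lemma pscomp_invCoeff (f : ℂ⟦X⟧) (h0 : coeff (R := ℂ) 0 f = 0) (h1 : coeff (R := ℂ) 1 f = 1) :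
    pscomp (mk (invCoeff f)) f = X := by
  ext m
  rw [coeff_pscomp', coeff_X]
  match m with
  | 0 => simpa using h0
  | 1 =>
    rw [Finset.sum_range_succ, Finset.sum_range_succ, Finset.sum_range_zero]
    simp [h0, h1, coeff_mk, invCoeff]
  | (p+2) =>
    have hset : Finset.range (p+3) = insert 0 (insert 1 (Finset.Icc 2 (p+2))) := by
      ext x; simp; omega
    rw [hset, Finset.sum_insert (by simp), Finset.sum_insert (by simp)]
    have hsum : ∑ l ∈ Finset.Icc 2 (p+2), coeff (R := ℂ) l f * coeff (R := ℂ) (p+2) ((mk (invCoeff f)) ^ l)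
        = ∑ l ∈ Finset.Icc 2 (p+2), coeff (R := ℂ) l f *
            coeff (R := ℂ) (p+2) ((PowerSeries.mk fun i => if h : i < p+2 then invCoeff f i else 0) ^ l) := by
      refine Finset.sum_congr rfl fun l hl => ?_
      rw [Finset.mem_Icc] at hl
      congr 1
      have hg0 : constantCoeff (R := ℂ) (PowerSeries.mk fun i => if h : i < p+2 then invCoeff f i else 0) = 0 := by
        rw [← coeff_zero_eq_constantCoeff, coeff_mk]
        split
        · rw [invCoeff]
        · rfl
      have hagr : ∀ i < p+2, coeff (R := ℂ) i (mk (invCoeff f)) =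
          coeff (R := ℂ) i (PowerSeries.mk fun i => if h : i < p+2 then invCoeff f i else 0) := by
        intro i hi
        rw [coeff_mk, coeff_mk, dif_pos hi]
      exact coeff_pow_congr' (constantCoeff_invCoeff f) hg0 hagr l (p+2) (by omega)
    rw [hsum]
    have hc1 : coeff (R := ℂ) (p+2) (mk (invCoeff f) ^ 1) = invCoeff f (p+2) := by
      rw [pow_one, coeff_mk]
    rw [hc1, h1, one_mul, h0, zero_mul, zero_add]
    rw [invCoeff]
    simp

open PowerSeries in
private lemma pscomp_one' (φ : ℂ⟦X⟧) : pscomp φ 1 = 1 := by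
  ext m
  rw [coeff_pscomp']
  have h : ∀ l ∈ Finset.range (m+1), coeff (R := ℂ) l (1:ℂ⟦X⟧) * coeff (R := ℂ) m (φ ^ l)
      = if l = 0 then coeff (R := ℂ) m ((1:ℂ⟦X⟧)) else 0 := by
    intro l _
    rw [coeff_one]
    split <;> simp_all [pow_zero]
  rw [Finset.sum_congr rfl h, Finset.sum_ite_eq' (Finset.range (m+1)) 0]
  simp

open PowerSeries in
private lemma invCoeff_agree (f : ℂ⟦X⟧) (M : ℕ)
    (hf : ∀ l < M, coeff (R := ℂ) l f = coeff (R := ℂ) l (X : ℂ⟦X⟧)) :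
    ∀ i < M, coeff (R := ℂ) i (mk (invCoeff f)) = coeff (R := ℂ) i (X : ℂ⟦X⟧) := by
  intro i hi
  rw [coeff_mk]
  match i with
  | 0 => rw [invCoeff]; simp
  | 1 => rw [invCoeff]; simp
  | (p+2) =>
    rw [invCoeff, coeff_X]
    simp only [if_neg (by omega : ¬ p+2 = 1)]
    have h : ∀ l ∈ Finset.Icc 2 (p+2), coeff (R := ℂ) l f *
        coeff (R := ℂ) (p+2) ((PowerSeries.mk fun i => if h : i < p+2 then invCoeff f i else 0) ^ l) = 0 := by
      intro l hl
      rw [Finset.mem_Icc] at hl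
      have hz : coeff (R := ℂ) l f = 0 := by
        rw [hf l (by omega), coeff_X, if_neg (by omega)]
      rw [hz, zero_mul]
    rw [Finset.sum_congr rfl h, Finset.sum_const_zero, neg_zero]

open PowerSeries in
private lemma coeff_pscomp_eq (φ a : ℂ⟦X⟧) (k j : ℕ)
    (ha : ∀ l ≤ j, coeff (R := ℂ) l a = coeff (R := ℂ) l ((X:ℂ⟦X⟧)^k))
    (hφk : coeff (R := ℂ) j (φ ^ k) = coeff (R := ℂ) j ((X:ℂ⟦X⟧)^k)) :
    coeff (R := ℂ) j (pscomp φ a) = coeff (R := ℂ) j ((X:ℂ⟦X⟧)^k) := by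
  rw [coeff_pscomp']
  have h : ∀ l ∈ Finset.range (j+1), coeff (R := ℂ) l a * coeff (R := ℂ) j (φ ^ l)
      = if l = k then coeff (R := ℂ) j (φ ^ k) else 0 := by
    intro l hl
    rw [Finset.mem_range] at hl
    rw [ha l (by omega), coeff_X_pow]
    split <;> simp_all
  rw [Finset.sum_congr rfl h, Finset.sum_ite_eq' (Finset.range (j+1)) k]
  rcases le_or_gt k j with hkj | hkj
  · rw [if_pos (Finset.mem_range.mpr (by omega)), hφk]
  · rw [if_neg (by simp; omega), coeff_X_pow, if_neg (by omega)]


open PowerSeries in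
/-- projecting an arc in Monge normal form (dimension `n+1`) from its
center yields an arc admitting a normalization in Monge normal form (dimension `n`). -/
theorem projection_of_monge_normal_form
    (n : ℕ) (hn : 2 ≤ n) (c : Fin (n + 2) → ℂ⟦X⟧)
    (h0 : c ⟨0, by omega⟩ = 1) (h1 : c ⟨1, by omega⟩ = PowerSeries.X)
    (hmid : ∀ (k : ℕ) (hk2 : 2 ≤ k) (hk : k ≤ n),
      ModEq (c ⟨k, by omega⟩) (PowerSeries.X ^ k) (n + 4))
    (hlast : ModEq (c ⟨n + 1, by omega⟩) (PowerSeries.X ^ (n + 1)) (n + 5))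
    (d : Fin (n + 1) → ℂ⟦X⟧)
    (hd : ∀ (k : Fin (n + 1)) (j : ℕ),
      PowerSeries.coeff (R := ℂ) j (d k) = PowerSeries.coeff (R := ℂ) (j + 1) (c k.succ)) :
    ∃ c' : Fin (n + 1) → ℂ⟦X⟧, IsNormalization d c' ∧
      c' ⟨0, by omega⟩ = 1 ∧ c' ⟨1, by omega⟩ = PowerSeries.X ∧
      (∀ (k : ℕ) (hk2 : 2 ≤ k) (hk : k ≤ n - 1),
        ModEq (c' ⟨k, by omega⟩) (PowerSeries.X ^ k) (n + 3)) ∧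
      ModEq (c' ⟨n, by omega⟩) (PowerSeries.X ^ n) (n + 4) := by
  classical
  have hdmid : ∀ (k : ℕ) (h1k : 1 ≤ k) (hkn : k + 1 ≤ n) (l : ℕ) (hl : l < n + 3),
      PowerSeries.coeff (R := ℂ) l (d ⟨k, by omega⟩) = PowerSeries.coeff (R := ℂ) l ((X:ℂ⟦X⟧)^k) := by
    intro k h1k hkn l hl
    rw [hd]
    have hs : ((⟨k, by omega⟩ : Fin (n+1)).succ : Fin (n+2)) = ⟨k+1, by omega⟩ := rfl
    rw [hs]
    have h2 := hmid (k+1) (by omega) hkn (l+1) (by omega)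
    rw [map_sub, sub_eq_zero] at h2
    rw [h2, coeff_X_pow, coeff_X_pow]
    rcases eq_or_ne l k with h | h
    · rw [if_pos (by omega), if_pos h]
    · rw [if_neg (by omega), if_neg h]
  have hdlast : ∀ l < n + 4,
      PowerSeries.coeff (R := ℂ) l (d ⟨n, by omega⟩) = PowerSeries.coeff (R := ℂ) l ((X:ℂ⟦X⟧)^n) := by
    intro l hl
    rw [hd]
    have hs : ((⟨n, by omega⟩ : Fin (n+1)).succ : Fin (n+2)) = ⟨n+1, by omega⟩ := rfl
    rw [hs]
    have h2 := hlast (l+1) (by omega)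
    rw [map_sub, sub_eq_zero] at h2
    rw [h2, coeff_X_pow, coeff_X_pow]
    rcases eq_or_ne l n with h | h
    · rw [if_pos (by omega), if_pos h]
    · rw [if_neg (by omega), if_neg h]
  have hd1 : ∀ l < n + 3,
      PowerSeries.coeff (R := ℂ) l (d ⟨1, by omega⟩) = PowerSeries.coeff (R := ℂ) l (X : ℂ⟦X⟧) := by
    intro l hl
    rw [hdmid 1 le_rfl (by omega) l hl, pow_one]
  set f : ℂ⟦X⟧ := d ⟨1, by omega⟩ with hfdef
  set φ : ℂ⟦X⟧ := PowerSeries.mk (invCoeff f) with hφdef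
  have hφ0 : PowerSeries.constantCoeff (R := ℂ) φ = 0 := constantCoeff_invCoeff f
  have hφ1 : PowerSeries.coeff (R := ℂ) 1 φ = 1 := by
    rw [hφdef, coeff_mk, invCoeff]
  have hφagree : ∀ i < n + 3,
      PowerSeries.coeff (R := ℂ) i φ = PowerSeries.coeff (R := ℂ) i (X : ℂ⟦X⟧) :=
    invCoeff_agree f (n+3) hd1
  have hXc : PowerSeries.constantCoeff (R := ℂ) (X : ℂ⟦X⟧) = 0 := constantCoeff_X
  have hφpow : ∀ (k j : ℕ), j + 1 < n + 3 + k →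
      PowerSeries.coeff (R := ℂ) j (φ ^ k) = PowerSeries.coeff (R := ℂ) j ((X:ℂ⟦X⟧)^k) := by
    intro k j hj
    exact coeff_pow_congr' hφ0 hXc hφagree k j hj
  refine ⟨fun i => pscomp φ (d i), ⟨1, 1, φ, ?_, isUnit_one, hφ0, ?_, ?_⟩, ?_, ?_, ?_, ?_⟩
  · rw [Matrix.det_one]; exact isUnit_one
  · rw [hφ1]; exact one_ne_zero
  · intro i
    have hsum : (∑ j, (1 : Matrix (Fin (n+1)) (Fin (n+1)) ℂ) i j • d j) = d i := by
      simp [Matrix.one_apply, ite_smul]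
    rw [one_mul, hsum]
  · have hd0 : d ⟨0, by omega⟩ = 1 := by
      ext j
      rw [hd]
      have hs : ((⟨0, by omega⟩ : Fin (n+1)).succ : Fin (n+2)) = ⟨1, by omega⟩ := rfl
      rw [hs, h1, coeff_X, coeff_one]
      rcases eq_or_ne j 0 with h | h
      · rw [if_pos (by omega), if_pos h]
      · rw [if_neg (by omega), if_neg h]
    show pscomp φ (d ⟨0, by omega⟩) = 1
    rw [hd0, pscomp_one']
  · show pscomp φ (d ⟨1, by omega⟩) = X
    have h0f : PowerSeries.coeff (R := ℂ) 0 f = 0 := by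
      rw [hd1 0 (by omega)]; simp
    have h1f : PowerSeries.coeff (R := ℂ) 1 f = 1 := by
      rw [hd1 1 (by omega)]; simp
    exact pscomp_invCoeff f h0f h1f
  · intro k hk2 hk
    intro j hj
    rw [map_sub, sub_eq_zero]
    show PowerSeries.coeff (R := ℂ) j (pscomp φ (d ⟨k, by omega⟩)) = PowerSeries.coeff (R := ℂ) j ((X:ℂ⟦X⟧)^k)
    refine coeff_pscomp_eq φ _ k j ?_ ?_
    · intro l hl
      exact hdmid k (by omega) (by omega) l (by omega)
    · exact hφpow k j (by omega)
  · intro j hj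
    rw [map_sub, sub_eq_zero]
    show PowerSeries.coeff (R := ℂ) j (pscomp φ (d ⟨n, by omega⟩)) = PowerSeries.coeff (R := ℂ) j ((X:ℂ⟦X⟧)^n)
    refine coeff_pscomp_eq φ _ n j ?_ ?_
    · intro l hl
      exact hdlast l (by omega)
    · exact hφpow n j (by omega)
end
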